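/- arXiv:2004.09621 — 2 statements merged into one kernel-verified Lean document; each statement's English description precedes it below -/
import Mathlib

section
/- Suppose every round of a core-language algorithm has a uni instruction, none of the round predicates ψ↾_k,…,ψ↾_l is an equalizer, and all rounds k,…,l have mult instructions. If set(f') ⊆ fire_k(f, ψ) and ? ∉ set(f'), then the sequence of round transitions f →[ψ↾_k]_k … →[ψ↾_l]_l f' is possible. -/
open Classical

namespace HO

/-! ### Values

`none` is the undefined value `?`; defined values are natural numbers, where
`some 0` plays the role of `a` and `some 1` the role of `b` (so `a < b`). -/

abbrev Val := Option ℕ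

def aVal : ℕ := 0
def bVal : ℕ := 1

/-! ### Operations -/

inductive Op where
  | min : Op
  | smor : Op

/-- Minimum of a multiset of defined values (`none` if the multiset is empty). -/
noncomputable def msMin (S : Multiset ℕ) : Option ℕ :=
  if h : S.toFinset.Nonempty then some (S.toFinset.min' h) else none

/-- Smallest most frequent value of a multiset (`none` if the multiset is empty). -/
noncomputable def msSmor (S : Multiset ℕ) : Option ℕ :=
  if h : (S.toFinset.filter fun v => ∀ w ∈ S.toFinset, S.count w ≤ S.count v).Nonempty
  then some ((S.toFinset.filter fun v => ∀ w ∈ S.toFinset, S.count w ≤ S.count v).min' h)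
  else none

noncomputable def Op.apply : Op → Multiset ℕ → Option ℕ
  | Op.min, S => msMin S
  | Op.smor, S => msSmor S

/-! ### Rounds

A round consists of at most one `uni` instruction followed by a list of `mult`
instructions with non-increasing thresholds, all thresholds lying in `[0,1)`. -/

structure Round where
  uniThr : Option ℝ
  mults : List (ℝ × Op)
  wfU : ∀ t ∈ uniThr, 0 ≤ t ∧ t < 1
  wfM : ∀ q ∈ mults, 0 ≤ q.1 ∧ q.1 < 1
  sorted : (mults.map Prod.fst).Chain' (· ≥ ·)

def Round.hasUni (R : Round) : Prop := R.uniThr.isSome = true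
def Round.hasMult (R : Round) : Prop := R.mults ≠ []

/-- `thr_u^i`: the threshold of the uni instruction, `-1` if absent. -/
noncomputable def Round.thrU (R : Round) : ℝ := R.uniThr.getD (-1)

noncomputable def minThr : List ℝ → ℝ
  | [] => -1
  | [t] => t
  | t :: ts => min t (minThr ts)

/-- `thr_m^{i,k}`: the smallest threshold of a mult instruction, `-1` if absent. -/
noncomputable def Round.thrM (R : Round) : ℝ := minThr (R.mults.map Prod.fst)

/-- Result of the first applicable `mult` instruction. -/
noncomputable def firstMult (n : ℕ) (S : Multiset ℕ) : List (ℝ × Op) → Option ℕ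
  | [] => none
  | (t, op) :: rest =>
      if 1 < S.toFinset.card ∧ t * n < (S.card : ℝ) then op.apply S
      else firstMult n S rest

/-- `update_i(H)`: the result of the first instruction of the round whose condition
is satisfied by `H − {?}`, and `?` (i.e. `none`) if no condition applies. -/
noncomputable def Round.update (R : Round) (n : ℕ) (H : Multiset Val) : Option ℕ :=
  if ∃ t ∈ R.uniThr,
      (H.filterMap id).toFinset.card = 1 ∧ t * n < ((H.filterMap id).card : ℝ)
  then msMin (H.filterMap id)
  else firstMult n (H.filterMap id) R.mults

/-! ### Communication predicates for a round -/

/-- A conjunction of atomic communication predicates for one round: possibly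
`φ_=` (field `eq`) and possibly `φ_thr` (field `thr`, with `0 ≤ thr < 1`). -/
structure RoundPred where
  eq : Bool
  thr : Option ℝ
  wf : ∀ t ∈ thr, 0 ≤ t ∧ t < 1

/-- `thr_i(ψ)`: the threshold appearing in the predicate, `-1` if absent. -/
noncomputable def RoundPred.thrVal (φ : RoundPred) : ℝ := φ.thr.getD (-1)

def RoundPred.isEqualizer (φ : RoundPred) : Prop := φ.eq = true

/-- Satisfaction of a round predicate by a tuple of heard-of multisets. -/
def RoundPred.sat {α : Type} (φ : RoundPred) (n : ℕ) (Hs : Fin n → Multiset α) : Prop :=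
  (φ.eq = true → ∀ p q, Hs p = Hs q) ∧
  ∀ t ∈ φ.thr, ∀ p, t * n < ((Hs p).card : ℝ)

/-- Logical implication between round predicates. -/
def RoundPred.implies (φ φ' : RoundPred) : Prop :=
  ∀ (α : Type) (n : ℕ) (Hs : Fin n → Multiset α), φ.sat n Hs → φ'.sat n Hs

/-! ### Tuples of values -/

/-- The multiset of values of a tuple. -/
def msetOf {n : ℕ} (f : Fin n → Val) : Multiset Val := Finset.univ.val.map f

def soloB (n : ℕ) : Fin n → Val := fun _ => some bVal
def soloA (n : ℕ) : Fin n → Val := fun _ => some aVal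
def soloQ (n : ℕ) : Fin n → Val := fun _ => none

/-- `bias(θ)`: a tuple over `{a,b}` with `θ·n` entries equal to `b`. -/
def isBias {n : ℕ} (θ : ℝ) (f : Fin n → Val) : Prop :=
  (∀ p, f p = some aVal ∨ f p = some bVal) ∧
  ((Finset.univ.filter fun p => f p = some bVal).card : ℝ) = θ * n

/-- `spread = bias(1/2)`. -/
def isSpread {n : ℕ} (f : Fin n → Val) : Prop := isBias (1/2) f

/-- `bias^?(θ)`: a tuple over `{?,b}` with `θ·n` entries equal to `b`. -/
def isBiasQ {n : ℕ} (θ : ℝ) (f : Fin n → Val) : Prop :=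
  (∀ p, f p = none ∨ f p = some bVal) ∧
  ((Finset.univ.filter fun p => f p = some bVal).card : ℝ) = θ * n

/-- `bias_a^?(θ)`: a tuple over `{?,a}` with `θ·n` entries equal to `a`. -/
def isBiasQa {n : ℕ} (θ : ℝ) (f : Fin n → Val) : Prop :=
  (∀ p, f p = none ∨ f p = some aVal) ∧
  ((Finset.univ.filter fun p => f p = some aVal).card : ℝ) = θ * n

/-! ### Round transitions -/

/-- Round transition `f →[φ]_i f'`: every process receives a sub-multiset of the
multiset of sent values, the tuple of heard-of multisets jointly satisfies `φ`,
and every process updates its variable accordingly. -/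
def roundTrans (R : Round) (φ : RoundPred) {n : ℕ} (f f' : Fin n → Val) : Prop :=
  ∃ Hs : Fin n → Multiset Val,
    (∀ p, Hs p ≤ msetOf f) ∧ φ.sat n Hs ∧ ∀ p, f' p = R.update n (Hs p)

/-- `d ∈ fire_i(f,φ)`. -/
def fire (R : Round) (φ : RoundPred) {n : ℕ} (f : Fin n → Val) (d : Val) : Prop :=
  ∃ f' : Fin n → Val, roundTrans R φ f f' ∧ ∃ p, f' p = d

/-! ### Algorithms -/

/-- An algorithm of the core language: rounds `1,…,r` (`r ≥ 2`), with a designated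
input-update round `ir` (`1 ≤ ir < r`). -/
structure Algo where
  r : ℕ
  rounds : ℕ → Round
  ir : ℕ
  two_le_r : 2 ≤ r
  one_le_ir : 1 ≤ ir
  ir_lt_r : ir < r

noncomputable def Algo.thrU (A : Algo) (i : ℕ) : ℝ := (A.rounds i).thrU
noncomputable def Algo.thrM (A : Algo) (i : ℕ) : ℝ := (A.rounds i).thrM
def Algo.hasUni (A : Algo) (i : ℕ) : Prop := (A.rounds i).hasUni
def Algo.hasMult (A : Algo) (i : ℕ) : Prop := (A.rounds i).hasMult

/-- A phase predicate: a conjunction of atomic predicates for every round. -/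
abbrev PhasePred := ℕ → RoundPred

/-- Phase transition `(f,d) →ψ (f',d')`. -/
def phaseTrans (A : Algo) (ψ : PhasePred) {n : ℕ} (f d f' d' : Fin n → Val) : Prop :=
  ∃ g : ℕ → Fin n → Val,
    g 0 = f ∧
    (∀ i, 1 ≤ i → i ≤ A.r → roundTrans (A.rounds i) (ψ i) (g (i - 1)) (g i)) ∧
    (∀ p, f' p = if g A.ir p = none then f p else g A.ir p) ∧
    (∀ p, d' p = if d p = none then g A.r p else d p)

/-- A chain of round transitions for rounds `k,…,l`. -/
def roundChain (A : Algo) (ψ : PhasePred) (k l : ℕ) {n : ℕ} (f f' : Fin n → Val) : Prop :=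
  ∃ g : ℕ → Fin n → Val,
    g (k - 1) = f ∧ g l = f' ∧
    ∀ i, k ≤ i → i ≤ l → roundTrans (A.rounds i) (ψ i) (g (i - 1)) (g i)

/-! ### Syntactic notions -/

/-- Round `i` is preserving w.r.t. `ψ`. -/
def Algo.preserving (A : Algo) (ψ : PhasePred) (i : ℕ) : Prop :=
  ¬ A.hasUni i ∨ ¬ A.hasMult i ∨ (ψ i).thrVal < max (A.thrU i) (A.thrM i)

/-- Round `i` is solo-safe w.r.t. `ψ`. -/
def Algo.soloSafe (A : Algo) (ψ : PhasePred) (i : ℕ) : Prop :=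
  0 ≤ A.thrU i ∧ A.thrU i ≤ (ψ i).thrVal

/-- The border threshold `thr̄ = max(1 − thr_u^1, 1 − thr_m^{1,k}/2)`. -/
noncomputable def Algo.borderThr (A : Algo) : ℝ :=
  max (1 - A.thrU 1) (1 - A.thrM 1 / 2)

/-- `ψ` is a decider: all rounds are solo-safe w.r.t. `ψ`. -/
def Algo.decider (A : Algo) (ψ : PhasePred) : Prop :=
  ∀ i, 1 ≤ i → i ≤ A.r → A.soloSafe ψ i

/-- `ψ` is a unifier. -/
def Algo.unifier (A : Algo) (ψ : PhasePred) : Prop :=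
  A.thrM 1 ≤ (ψ 1).thrVal ∧
  (A.thrU 1 ≤ (ψ 1).thrVal ∨ A.borderThr ≤ (ψ 1).thrVal) ∧
  ∃ i, 1 ≤ i ∧ i ≤ A.ir ∧ (ψ i).isEqualizer ∧
    (∀ j, 2 ≤ j → j ≤ i → ¬ A.preserving ψ j) ∧
    (∀ j, i < j → j ≤ A.ir → A.soloSafe ψ j)

/-- The algorithm is syntactically safe. -/
def Algo.syntSafe (A : Algo) : Prop :=
  A.hasMult 1 ∧
  (∀ i, 1 ≤ i → i ≤ A.r → A.hasUni i) ∧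
  (∀ q ∈ (A.rounds 1).mults, q.2 = Op.smor) ∧
  1 - A.thrU (A.ir + 1) ≤ A.thrM 1 / 2 ∧
  1 - A.thrU (A.ir + 1) ≤ A.thrU 1

/-- Assumption (A) relative to the global predicate `gl`. -/
def Algo.assumptionA (A : Algo) (gl : PhasePred) : Prop :=
  ∀ i, 1 ≤ i → i ≤ A.r →
    (∀ j, 1 ≤ j → j < i → ¬ A.preserving gl j) →
    (A.hasUni i → (gl i).thrVal ≤ A.thrU i) ∧
    (A.hasMult i → (gl i).thrVal ≤ A.thrM i)

/-- Proviso (P): the global predicate has no equalizer and round `ir+1` has no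
mult instruction. -/
def Algo.provisoP (A : Algo) (gl : PhasePred) : Prop :=
  (∀ i, 1 ≤ i → i ≤ A.r → ¬ (gl i).isEqualizer) ∧ ¬ A.hasMult (A.ir + 1)

/-- Removing all mult instructions of a round. -/
def Round.dropMults (R : Round) : Round :=
  { uniThr := R.uniThr, mults := [], wfU := R.wfU,
    wfM := by simp, sorted := by first | exact List.IsChain.nil | exact List.chain'_nil | simp [List.Chain'] }

/-- Removing all mult instructions of round `i` of an algorithm. -/
def Algo.dropMultsAt (A : Algo) (i : ℕ) : Algo :=
  { A with rounds := fun j => if j = i then (A.rounds j).dropMults else A.rounds j }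

/-! ### Communication predicates, executions, consensus -/

/-- A communication predicate `(G ψ̄) ∧ F(ψ^1 ∧ F(ψ^2 ∧ … ∧ F ψ^k))`:
a global phase predicate and sporadic phase predicates `ψ^1,…,ψ^k`. -/
structure CommPred where
  glob : PhasePred
  k : ℕ
  spor : ℕ → PhasePred

/-- Roundwise implication between phase predicates of an algorithm. -/
def predImplies (A : Algo) (ψ ψ' : PhasePred) : Prop :=
  ∀ i, 1 ≤ i → i ≤ A.r → (ψ i).implies (ψ' i)

/-- An execution of an algorithm respecting a communication predicate: an infinite
sequence of phase transitions under the global predicate, together with an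
increasing sequence of times at which the sporadic predicates hold. -/
structure Exec (A : Algo) (C : CommPred) (n : ℕ) where
  inp : ℕ → Fin n → Val
  dec : ℕ → Fin n → Val
  inp0 : ∀ p, inp 0 p ≠ none
  dec0 : ∀ p, dec 0 p = none
  step : ∀ s, phaseTrans A C.glob (inp s) (dec s) (inp (s + 1)) (dec (s + 1))
  sporTime : ℕ → ℕ
  mono : StrictMono sporTime
  sporStep : ∀ i, 1 ≤ i → i ≤ C.k →
    phaseTrans A (C.spor i) (inp (sporTime i)) (dec (sporTime i))
      (inp (sporTime i + 1)) (dec (sporTime i + 1))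

/-- Agreement: in every reachable state, any two non-`?` decision values coincide. -/
def Agreement (A : Algo) (C : CommPred) : Prop :=
  ∀ n, 0 < n → ∀ E : Exec A C n, ∀ s p q v w,
    E.dec s p = some v → E.dec s q = some w → v = w

/-- Termination: every execution reaches a state where all processes have decided. -/
def Termination (A : Algo) (C : CommPred) : Prop :=
  ∀ n, 0 < n → ∀ E : Exec A C n, ∃ s, ∀ p, E.dec s p ≠ none

/-- Solving consensus: agreement and termination. -/
def SolvesConsensus (A : Algo) (C : CommPred) : Prop :=
  Agreement A C ∧ Termination A C

/-- A tuple over the two values `a`, `b` and the undefined value `?`. -/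
def twoValuedQ {n : ℕ} (f : Fin n → Val) : Prop :=
  ∀ p, f p = none ∨ f p = some aVal ∨ f p = some bVal

/-! ### Auxiliary lemmas for Statement 11 -/

lemma aux_filterMap_id_add (s t : Multiset Val) :
    (s + t).filterMap id = s.filterMap id + t.filterMap id := by
  induction s using Multiset.induction with
  | empty => simp
  | cons a s ih =>
      rw [Multiset.cons_add]
      cases a with
      | none =>
          rw [Multiset.filterMap_cons_none _ _ rfl, Multiset.filterMap_cons_none _ _ rfl, ih]
      | some v =>
          rw [Multiset.filterMap_cons_some id _ _ rfl, Multiset.filterMap_cons_some id _ _ rfl,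
            ih, Multiset.cons_add]

lemma aux_filterMap_id_replicate (c v : ℕ) :
    (Multiset.replicate c (some v) : Multiset Val).filterMap id = Multiset.replicate c v := by
  induction c with
  | zero => simp
  | succ m ih =>
      rw [Multiset.replicate_succ, Multiset.replicate_succ,
        Multiset.filterMap_cons_some id _ _ rfl, ih]

/-- The pair multiset with `ca` copies of `0` and `cb` copies of `1`. -/
def pairMS (ca cb : ℕ) : Multiset ℕ :=
  Multiset.replicate ca 0 + Multiset.replicate cb 1

/-- The corresponding multiset of values. -/
def pairVS (ca cb : ℕ) : Multiset Val :=
  Multiset.replicate ca (some 0) + Multiset.replicate cb (some 1)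

lemma aux_filterMap_pair (ca cb : ℕ) : (pairVS ca cb).filterMap id = pairMS ca cb := by
  rw [pairVS, pairMS, aux_filterMap_id_add, aux_filterMap_id_replicate, aux_filterMap_id_replicate]

lemma pairMS_card (ca cb : ℕ) : (pairMS ca cb).card = ca + cb := by
  simp [pairMS]

lemma pairVS_card (ca cb : ℕ) : (pairVS ca cb).card = ca + cb := by
  simp [pairVS]

lemma pairMS_toFinset {ca cb : ℕ} (hca : 1 ≤ ca) (hcb : 1 ≤ cb) :
    (pairMS ca cb).toFinset = {0, 1} := by
  rw [pairMS, Multiset.toFinset_add, Multiset.toFinset_replicate, Multiset.toFinset_replicate,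
    if_neg (by omega), if_neg (by omega)]
  rfl

lemma pairMS_count0 (ca cb : ℕ) : (pairMS ca cb).count 0 = ca := by
  simp [pairMS, Multiset.count_replicate]

lemma pairMS_count1 (ca cb : ℕ) : (pairMS ca cb).count 1 = cb := by
  simp [pairMS, Multiset.count_replicate]

lemma msMin_replicate {c v : ℕ} (hc : 1 ≤ c) :
    msMin (Multiset.replicate c v) = some v := by
  have h : (Multiset.replicate c v).toFinset = {v} := by
    rw [Multiset.toFinset_replicate, if_neg (by omega)]
  rw [msMin, dif_pos (by rw [h]; exact Finset.singleton_nonempty v)]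
  congr 1
  apply le_antisymm
  · exact Finset.min'_le _ _ (by rw [h]; simp)
  · apply Finset.le_min'
    intro y hy
    rw [h, Finset.mem_singleton] at hy
    omega

lemma msMin_pair {ca cb : ℕ} (hca : 1 ≤ ca) (hcb : 1 ≤ cb) :
    msMin (pairMS ca cb) = some 0 := by
  have h := pairMS_toFinset hca hcb
  have hne : (pairMS ca cb).toFinset.Nonempty := by
    rw [h]; exact ⟨0, by simp⟩
  rw [msMin, dif_pos hne]
  congr 1
  refine Nat.le_antisymm (Finset.min'_le _ _ (by rw [h]; simp)) (Nat.zero_le _)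

lemma msSmor_pair_a {ca cb : ℕ} (hcb : 1 ≤ cb) (hba : cb ≤ ca) :
    msSmor (pairMS ca cb) = some 0 := by
  have hca : 1 ≤ ca := le_trans hcb hba
  have h := pairMS_toFinset hca hcb
  have h0 : 0 ∈ (pairMS ca cb).toFinset.filter
      fun v => ∀ w ∈ (pairMS ca cb).toFinset, (pairMS ca cb).count w ≤ (pairMS ca cb).count v := by
    rw [Finset.mem_filter]
    constructor
    · rw [h]; simp
    · intro w hw
      rw [h] at hw
      rw [pairMS_count0]
      rcases Finset.mem_insert.mp hw with h1 | h1
      · rw [h1, pairMS_count0]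
      · rw [Finset.mem_singleton.mp h1, pairMS_count1]; exact hba
  rw [msSmor, dif_pos ⟨0, h0⟩]
  congr 1
  exact Nat.le_antisymm (Finset.min'_le _ _ h0) (Nat.zero_le _)

lemma msSmor_pair_b {ca cb : ℕ} (hca : 1 ≤ ca) (hba : ca < cb) :
    msSmor (pairMS ca cb) = some 1 := by
  have hcb : 1 ≤ cb := le_trans hca (le_of_lt hba)
  have h := pairMS_toFinset hca hcb
  have hfil : (pairMS ca cb).toFinset.filter
      (fun v => ∀ w ∈ (pairMS ca cb).toFinset, (pairMS ca cb).count w ≤ (pairMS ca cb).count v)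
      = {1} := by
    ext v
    rw [Finset.mem_filter, Finset.mem_singleton, h]
    constructor
    · rintro ⟨hv, hall⟩
      rcases Finset.mem_insert.mp hv with h1 | h1
      · exfalso
        have := hall 1 (by simp)
        rw [h1, pairMS_count0, pairMS_count1] at this
        omega
      · exact Finset.mem_singleton.mp h1
    · rintro rfl
      refine ⟨by simp, ?_⟩
      intro w hw
      rw [pairMS_count1]
      rcases Finset.mem_insert.mp hw with h1 | h1
      · rw [h1, pairMS_count0]; omega
      · rw [Finset.mem_singleton.mp h1, pairMS_count1]
  rw [msSmor, dif_pos (by rw [hfil]; exact ⟨1, by simp⟩)]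
  congr 1
  apply le_antisymm
  · exact Finset.min'_le _ _ (by rw [hfil]; simp)
  · apply Finset.le_min'
    intro y hy
    rw [hfil, Finset.mem_singleton] at hy
    omega

lemma update_of_replicate (R : Round) {tu : ℝ} (htu : R.uniThr = some tu)
    {n c v : ℕ} (hc : 1 ≤ c) (ht : tu * n < (c : ℝ)) :
    R.update n (Multiset.replicate c (some v)) = some v := by
  have hfm := aux_filterMap_id_replicate c v
  have htf : (Multiset.replicate c v).toFinset = {v} := by
    rw [Multiset.toFinset_replicate, if_neg (by omega)]
  rw [Round.update, if_pos, hfm, msMin_replicate hc]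
  exact ⟨tu, by rw [htu]; rfl, by rw [hfm, htf]; simp, by rw [hfm, Multiset.card_replicate]; exact ht⟩

lemma update_of_pair (R : Round) {t₁ : ℝ} {op : Op} {rest : List (ℝ × Op)}
    (hmul : R.mults = (t₁, op) :: rest)
    {n ca cb : ℕ} (hca : 1 ≤ ca) (hcb : 1 ≤ cb) (ht : t₁ * n < ((ca + cb : ℕ) : ℝ)) :
    R.update n (pairVS ca cb) = op.apply (pairMS ca cb) := by
  have hfm := aux_filterMap_pair ca cb
  have htf := pairMS_toFinset hca hcb
  have hcard2 : (pairMS ca cb).toFinset.card = 2 := by rw [htf]; rfl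
  rw [Round.update, if_neg, hmul, hfm]
  · rw [firstMult, if_pos]
    exact ⟨by rw [hcard2]; omega, by rw [pairMS_card]; exact ht⟩
  · rintro ⟨t, htmem, hone, -⟩
    rw [hfm, hcard2] at hone
    omega

lemma count_msetOf {n : ℕ} (f : Fin n → Val) (v : Val) :
    (msetOf f).count v = (Finset.univ.filter fun p => f p = v).card := by
  rw [msetOf, Multiset.count_map, Finset.card_filter]
  simp [eq_comm]
  rfl

lemma card_msetOf {n : ℕ} (f : Fin n → Val) : (msetOf f).card = n := by
  simp [msetOf]

lemma pairVS_le_msetOf {n ca cb : ℕ} {f : Fin n → Val}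
    (h0 : ca ≤ (msetOf f).count (some 0)) (h1 : cb ≤ (msetOf f).count (some 1)) :
    pairVS ca cb ≤ msetOf f := by
  rw [Multiset.le_iff_count]
  intro x
  rw [pairVS, Multiset.count_add, Multiset.count_replicate, Multiset.count_replicate]
  by_cases hx0 : (some 0 : Val) = x
  · rw [← hx0]; simpa using h0
  · by_cases hx1 : (some 1 : Val) = x
    · rw [← hx1]; simpa [hx0] using h1
    · rw [if_neg hx0, if_neg hx1]
      exact Nat.zero_le _

lemma card_filter_coe_lt (n c : ℕ) :
    (Finset.univ.filter fun p : Fin n => (p : ℕ) < c).card = min c n := by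
  have h : (Finset.univ.filter fun p : Fin n => (p : ℕ) < c) =
      (Finset.range (min c n)).attachFin
        (fun m hm => lt_of_lt_of_le (Finset.mem_range.mp hm) (min_le_right _ _)) := by
    ext p
    simp [Finset.mem_attachFin, Nat.lt_min, p.isLt]
  rw [h, Finset.card_attachFin, Finset.card_range]

/-- Assembling a round transition from per-process heard-of multisets. -/
lemma assemble_trans (R : Round) (φ : RoundPred) {n : ℕ} (src T : Fin n → Val)
    (hne : ¬ φ.isEqualizer)
    (hH : ∀ p, ∃ H : Multiset Val, H ≤ msetOf src ∧
      (∀ t ∈ φ.thr, t * n < (H.card : ℝ)) ∧ R.update n H = T p) :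
    roundTrans R φ src T := by
  choose H h1 h2 h3 using hH
  exact ⟨H, h1, ⟨fun he => absurd he hne, fun t ht p => h2 p t ht⟩, fun p => (h3 p).symm⟩
instance : Inhabited Op := ⟨Op.min⟩

/-- The operation of the first mult instruction. -/
def headOp (R : Round) : Op := (R.mults.map Prod.snd).headI

/-- The threshold of the first mult instruction. -/
noncomputable def headThr (R : Round) : ℝ := (R.mults.map Prod.fst).headI

lemma uniThr_eq (R : Round) (hU : R.hasUni) : R.uniThr = some R.thrU := by
  rcases h : R.uniThr with - | t
  · rw [Round.hasUni, h] at hU; simp at hU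
  · rw [Round.thrU, h]; rfl

lemma thrU_lt_one (R : Round) : R.thrU < 1 := by
  rcases h : R.uniThr with - | t
  · rw [Round.thrU, h]; norm_num
  · rw [Round.thrU, h]
    exact (R.wfU t (by rw [h]; rfl)).2

lemma thrU_lt_one' (R : Round) : -1 ≤ R.thrU := by
  rcases h : R.uniThr with - | t
  · rw [Round.thrU, h]; norm_num
  · rw [Round.thrU, h]
    have := (R.wfU t (by rw [h]; rfl)).1
    simp only [Option.getD_some]
    linarith

lemma headThr_lt_one (R : Round) : headThr R < 1 := by
  rcases h : R.mults with - | ⟨q, rest⟩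
  · rw [headThr, h]
    have hd : (([] : List ℝ).headI) = 0 := rfl
    simp only [List.map_nil, hd]
    norm_num
  · rw [headThr, h]
    have := (R.wfM q (by rw [h]; exact List.mem_cons_self)).2
    simpa using this

lemma thrVal_lt_one (φ : RoundPred) : φ.thrVal < 1 := by
  rcases h : φ.thr with - | t
  · rw [RoundPred.thrVal, h]; norm_num
  · rw [RoundPred.thrVal, h]
    exact (φ.wf t (by rw [h]; rfl)).2

lemma thrVal_of_mem {φ : RoundPred} {t : ℝ} (ht : t ∈ φ.thr) : t = φ.thrVal := by
  rw [Option.mem_def] at ht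
  rw [RoundPred.thrVal, ht]
  rfl

/-- A tuple with the first `c` entries equal to `a` and the rest equal to `b`. -/
def cutT (n c : ℕ) : Fin n → Val := fun p => if (p : ℕ) < c then some 0 else some 1

lemma count_cutT0 (n c : ℕ) : (msetOf (cutT n c)).count (some 0) = min c n := by
  rw [count_msetOf, ← card_filter_coe_lt n c]
  congr 1
  apply Finset.filter_congr
  intro p _
  by_cases h : (p : ℕ) < c <;> simp [cutT, h]

lemma count_cutT1 (n c : ℕ) : (msetOf (cutT n c)).count (some 1) = n - min c n := by
  rw [count_msetOf]
  have h := Finset.card_filter_add_card_filter_not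
    (s := (Finset.univ : Finset (Fin n))) (p := fun p => (p : ℕ) < c)
  rw [card_filter_coe_lt] at h
  have h0 : Finset.univ.filter (fun p : Fin n => cutT n c p = some 1)
      = Finset.univ.filter (fun p : Fin n => ¬ (p : ℕ) < c) := by
    apply Finset.filter_congr
    intro p _
    by_cases hp : (p : ℕ) < c <;> simp [cutT, hp]
  rw [h0]
  have hcu : (Finset.univ : Finset (Fin n)).card = n := by simp
  omega

/-- The intermediate tuple used for a round `R`. -/
noncomputable def midT (R : Round) (n : ℕ) : Fin n → Val :=
  cutT n (if headOp R = Op.min then 1 else (n + 1) / 2)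

lemma midT_vals (R : Round) (n : ℕ) (p : Fin n) :
    midT R n p = some 0 ∨ midT R n p = some 1 := by
  by_cases h : (p : ℕ) < (if headOp R = Op.min then 1 else (n + 1) / 2) <;>
    simp [midT, cutT, h]

/-- One round transition from the intermediate tuple to an arbitrary two-valued target. -/
lemma mid_step (R : Round) (φ : RoundPred) (hU : R.hasUni) (hM : R.hasMult)
    (hne : ¬ φ.isEqualizer) {n : ℕ} (hn : 4 ≤ n)
    (hbound : ∀ cc : ℕ, n - 2 ≤ cc →
      (∀ t ∈ φ.thr, t * n < (cc : ℝ)) ∧ R.thrU * n < (cc : ℝ) ∧ headThr R * n < (cc : ℝ))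
    (T : Fin n → Val) (hT : ∀ p, T p = some 0 ∨ T p = some 1) :
    roundTrans R φ (midT R n) T := by
  have htu := uniThr_eq R hU
  obtain ⟨⟨t₁, op⟩, rest, hmul⟩ := List.exists_cons_of_ne_nil hM
  have hopq : headOp R = op := by rw [headOp, hmul]; rfl
  have htq : headThr R = t₁ := by rw [headThr, hmul]; rfl
  apply assemble_trans R φ _ _ hne
  intro p
  by_cases hop : headOp R = Op.min
  · -- the head operation is `min`; the intermediate tuple has one `a`, `n-1` `b`s
    have hmid : midT R n = cutT n 1 := by rw [midT, if_pos hop]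
    have h0 : (msetOf (midT R n)).count (some 0) = 1 := by
      rw [hmid, count_cutT0]; omega
    have h1 : (msetOf (midT R n)).count (some 1) = n - 1 := by
      rw [hmid, count_cutT1]; omega
    have hopmin : op = Op.min := hopq ▸ hop
    rcases hT p with hTp | hTp
    · -- produce `a` via the head `min` instruction
      refine ⟨pairVS 1 (n - 1), pairVS_le_msetOf (by omega) (by omega), ?_, ?_⟩
      · intro t ht
        rw [pairVS_card]
        exact (hbound (1 + (n - 1)) (by omega)).1 t ht
      · rw [update_of_pair R hmul (by omega) (by omega)
          (by rw [← htq]; exact (hbound (1 + (n - 1)) (by omega)).2.2), hopmin, hTp]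
        exact msMin_pair (by omega) (by omega)
    · -- produce `b` via the uni instruction
      refine ⟨Multiset.replicate (n - 1) (some 1), ?_, ?_, ?_⟩
      · rw [← Multiset.le_count_iff_replicate_le, h1]
      · intro t ht
        rw [Multiset.card_replicate]
        exact (hbound (n - 1) (by omega)).1 t ht
      · rw [update_of_replicate R htu (by omega) ((hbound (n - 1) (by omega)).2.1), hTp]
  · -- the head operation is `smor`; the intermediate tuple is (almost) balanced
    have hopsm : op = Op.smor := by
      cases hop2 : op
      · exact absurd (hopq.trans hop2) hop
      · rfl
    have hmid : midT R n = cutT n ((n + 1) / 2) := by rw [midT, if_neg hop]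
    have h0 : (msetOf (midT R n)).count (some 0) = (n + 1) / 2 := by
      rw [hmid, count_cutT0]; omega
    have h1 : (msetOf (midT R n)).count (some 1) = n - (n + 1) / 2 := by
      rw [hmid, count_cutT1]; omega
    rcases hT p with hTp | hTp
    · -- produce `a` via the head `smor` instruction (ties broken towards `a`)
      refine ⟨pairVS ((n + 1) / 2) (n - (n + 1) / 2),
        pairVS_le_msetOf (by omega) (by omega), ?_, ?_⟩
      · intro t ht
        rw [pairVS_card]
        exact (hbound _ (by omega)).1 t ht
      · rw [update_of_pair R hmul (by omega) (by omega)
          (by rw [← htq]; exact (hbound _ (by omega)).2.2), hopsm, hTp]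
        exact msSmor_pair_a (by omega) (by omega)
    · -- produce `b` via the head `smor` instruction (`b` strictly more frequent)
      refine ⟨pairVS (n - (n + 1) / 2 - 1) (n - (n + 1) / 2),
        pairVS_le_msetOf (by omega) (by omega), ?_, ?_⟩
      · intro t ht
        rw [pairVS_card]
        exact (hbound _ (by omega)).1 t ht
      · rw [update_of_pair R hmul (by omega) (by omega)
          (by rw [← htq]; exact (hbound _ (by omega)).2.2), hopsm, hTp]
        exact msSmor_pair_b (by omega) (by omega)

/-- One round transition keeping a constant tuple constant, via the uni instruction. -/
lemma const_step (R : Round) (φ : RoundPred) (hU : R.hasUni) (hne : ¬ φ.isEqualizer)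
    (n : ℕ) (hn : 1 ≤ n) (v : ℕ)
    (hbound : R.thrU * n < (n : ℝ)) (hbound2 : ∀ t ∈ φ.thr, t * n < (n : ℝ)) :
    roundTrans R φ (fun _ : Fin n => some v) (fun _ : Fin n => some v) := by
  have htu := uniThr_eq R hU
  apply assemble_trans R φ _ _ hne
  intro p
  refine ⟨Multiset.replicate n (some v), ?_, ?_, ?_⟩
  · rw [← Multiset.le_count_iff_replicate_le, count_msetOf]
    simp
  · intro t ht
    rw [Multiset.card_replicate]
    exact hbound2 t ht
  · rw [update_of_replicate R htu hn hbound]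
/-- Lemma 8.  Suppose every round has a uni instruction, none
of `ψ↾_k,…,ψ↾_l` is an equalizer, and all rounds `k,…,l` have mult
instructions.  If `set(f') ⊆ fire_k(f,ψ)` and `? ∉ set(f')` then the chain of
round transitions `f →[ψ↾_k]_k ⋯ →[ψ↾_l]_l f'` is possible (for all
sufficiently large `n`). -/
theorem any_frequency_reachable (A : Algo) (ψ : PhasePred) (k l : ℕ)
    (hk : 1 ≤ k) (hkl : k ≤ l) (hl : l ≤ A.r)
    (huni : ∀ j, 1 ≤ j → j ≤ A.r → A.hasUni j)
    (hne : ∀ j, k ≤ j → j ≤ l → ¬ (ψ j).isEqualizer)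
    (hm : ∀ j, k ≤ j → j ≤ l → A.hasMult j) :
    ∃ n₀ : ℕ, ∀ n : ℕ, n₀ ≤ n → ∀ f f' : Fin n → Val,
      twoValuedQ f →
      (∀ p, f' p = some aVal ∨ f' p = some bVal) →
      (∀ p, fire (A.rounds k) (ψ k) f (f' p)) →
      roundChain A ψ k l f f' := by
  classical
  set c : ℕ → ℝ := fun j =>
    max ((ψ j).thrVal) (max ((A.rounds j).thrU) (headThr (A.rounds j))) with hcdef
  have hc1 : ∀ j, c j < 1 := fun j => by
    simp only [hcdef, max_lt_iff]
    exact ⟨thrVal_lt_one _, thrU_lt_one _, headThr_lt_one _⟩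
  have hex : ∀ j : ℕ, ∃ N : ℕ, 2 / (1 - c j) < (N : ℝ) := fun j => exists_nat_gt _
  choose N hN using hex
  refine ⟨max 4 ((Finset.range (l + 1)).sup N), ?_⟩
  intro n hn f f' hf2 hf'2 hfire
  have hn4 : 4 ≤ n := le_trans (le_max_left _ _) hn
  have hkey : ∀ j, j ≤ l → ∀ t : ℝ, t ≤ c j → ∀ cc : ℕ, n - 2 ≤ cc → t * n < (cc : ℝ) := by
    intro j hj t ht cc hcc
    have hNn : N j ≤ n :=
      le_trans (le_trans (Finset.le_sup (Finset.mem_range.mpr (by omega))) (le_max_right 4 _)) hn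
    have hpos : (0 : ℝ) < 1 - c j := by linarith [hc1 j]
    have h2 : 2 / (1 - c j) < (n : ℝ) := lt_of_lt_of_le (hN j) (Nat.cast_le.mpr hNn)
    have h3 : 2 < (1 - c j) * n := by
      rw [div_lt_iff₀ hpos] at h2
      linarith
    have hcast : ((n : ℝ) - 2) ≤ (cc : ℝ) := by
      have h4 : ((n - 2 : ℕ) : ℝ) ≤ (cc : ℝ) := Nat.cast_le.mpr hcc
      rw [Nat.cast_sub (by omega)] at h4
      simpa using h4
    have h5 : t * n ≤ c j * n := mul_le_mul_of_nonneg_right ht (Nat.cast_nonneg n)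
    nlinarith
  -- the three thresholds of round `j` are bounded by `c j`
  have hcψ : ∀ j, ∀ t ∈ (ψ j).thr, t ≤ c j := fun j t ht => by
    rw [thrVal_of_mem ht]; exact le_max_left _ _
  have hcU : ∀ j, (A.rounds j).thrU ≤ c j := fun j =>
    le_trans (le_max_left _ _) (le_max_right _ _)
  have hcM : ∀ j, headThr (A.rounds j) ≤ c j := fun j =>
    le_trans (le_max_right _ _) (le_max_right _ _)
  have hboundj : ∀ j, k ≤ j → j ≤ l → ∀ cc : ℕ, n - 2 ≤ cc →
      (∀ t ∈ (ψ j).thr, t * n < (cc : ℝ)) ∧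
      (A.rounds j).thrU * n < (cc : ℝ) ∧ headThr (A.rounds j) * n < (cc : ℝ) := by
    intro j hkj hj cc hcc
    exact ⟨fun t ht => hkey j hj t (hcψ j t ht) cc hcc,
      hkey j hj _ (hcU j) cc hcc, hkey j hj _ (hcM j) cc hcc⟩
  -- extracting heard-of multisets from fireability
  have hfireH : ∀ v : Val, fire (A.rounds k) (ψ k) f v →
      ∃ H : Multiset Val, H ≤ msetOf f ∧
        (∀ t ∈ (ψ k).thr, t * n < (H.card : ℝ)) ∧ (A.rounds k).update n H = v := by
    rintro v ⟨f'', ⟨Hs, hle, hsat, hupd⟩, q, hq⟩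
    exact ⟨Hs q, hle q, fun t ht => hsat.2 t ht q, (hupd q).symm.trans hq⟩
  have hstep_k : ∀ T : Fin n → Val, (∀ p, fire (A.rounds k) (ψ k) f (T p)) →
      roundTrans (A.rounds k) (ψ k) f T := fun T hT =>
    assemble_trans _ _ _ _ (hne k le_rfl hkl) (fun p => hfireH (T p) (hT p))
  have hf'01 : ∀ p, f' p = some 0 ∨ f' p = some 1 := fun p => hf'2 p
  by_cases hconst : ∀ p q : Fin n, f' p = f' q
  · -- constant target: go through constant tuples
    have hp0 : (0 : ℕ) < n := by omega
    set p0 : Fin n := ⟨0, hp0⟩ with hp0def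
    obtain ⟨v, hv⟩ : ∃ v : ℕ, f' p0 = some v := by
      rcases hf'01 p0 with h | h
      · exact ⟨0, h⟩
      · exact ⟨1, h⟩
    have hfc : f' = fun _ : Fin n => some v := funext fun p => (hconst p p0).trans hv
    set g : ℕ → Fin n → Val := fun i => if i < k then f else f' with hg
    have hgval : ∀ j, g j = if j < k then f else f' := fun j => rfl
    refine ⟨g, by rw [hgval, if_pos (by omega)], by rw [hgval, if_neg (by omega)], ?_⟩
    intro i hki hil
    rw [hgval, hgval, if_neg (show ¬ i < k by omega)]
    by_cases hik : i = k
    · subst hik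
      rw [if_pos (by omega)]
      exact hstep_k f' hfire
    · rw [if_neg (show ¬ i - 1 < k by omega)]
      rw [hfc]
      exact const_step (A.rounds i) (ψ i) (huni i (by omega) (le_trans hil hl))
        (hne i (by omega) hil) n (by omega) v
        ((hboundj i (by omega) hil n (by omega)).2.1)
        ((hboundj i (by omega) hil n (by omega)).1)
  · -- non-constant target: both values are fireable
    push_neg at hconst
    obtain ⟨p₁, q₁, hpq⟩ := hconst
    have hfire0 : fire (A.rounds k) (ψ k) f (some 0) := by
      rcases hf'01 p₁ with h | h
      · exact h ▸ hfire p₁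
      · rcases hf'01 q₁ with h' | h'
        · exact h' ▸ hfire q₁
        · exact absurd (h.trans h'.symm) hpq
    have hfire1 : fire (A.rounds k) (ψ k) f (some 1) := by
      rcases hf'01 p₁ with h | h
      · rcases hf'01 q₁ with h' | h'
        · exact absurd (h.trans h'.symm) hpq
        · exact h' ▸ hfire q₁
      · exact h ▸ hfire p₁
    set g : ℕ → Fin n → Val := fun i => if i < k then f
      else if i < l then midT (A.rounds (i + 1)) n else f' with hg
    have hgval : ∀ j, g j = if j < k then f
      else if j < l then midT (A.rounds (j + 1)) n else f' := fun j => rfl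
    refine ⟨g, by rw [hgval, if_pos (by omega)],
      by rw [hgval, if_neg (show ¬ l < k by omega), if_neg (show ¬ l < l by omega)], ?_⟩
    intro i hki hil
    -- the target of round `i` is two-valued
    have htgt : ∀ p, g i p = some 0 ∨ g i p = some 1 := by
      intro p
      rw [hgval, if_neg (show ¬ i < k by omega)]
      by_cases hil' : i < l
      · rw [if_pos hil']
        exact midT_vals _ n p
      · rw [if_neg hil']
        exact hf'01 p
    by_cases hik : i = k
    · subst hik
      have hsrc : g (i - 1) = f := by rw [hgval, if_pos (by omega)]
      rw [hsrc]
      apply hstep_k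
      intro p
      rcases htgt p with h | h <;> rw [h]
      · exact hfire0
      · exact hfire1
    · have hi1 : 1 ≤ i := by omega
      have hsrc : g (i - 1) = midT (A.rounds i) n := by
        rw [hgval, if_neg (show ¬ i - 1 < k by omega),
          if_pos (show i - 1 < l by omega)]
        have h11 : i - 1 + 1 = i := by omega
        rw [h11]
      rw [hsrc]
      exact mid_step (A.rounds i) (ψ i) (huni i (by omega) (le_trans hil hl))
        (hm i (by omega) hil) (hne i (by omega) hil) hn4
        (hboundj i (by omega) hil) _ htgt

end HO
end

section
/- Consider a syntactically safe core-language algorithm satisfying Assumption (A), and let ψ be a decider whose round predicates imply those of the global predicate. Then: (1) if (solo, solo^?) →ψ (f',d') then (f',d') = (solo, solo); (2) if (solo^a, solo^?) →ψ (f',d') then (f',d') = (solo^a, solo^a); (3) if moreover thr_m^{1,k} ≤ thr_u^1, then for every θ ≥ thr̄, (bias(θ), solo^?) →ψ (f',d') implies (f',d') = (solo, solo), and for every θ ≤ 1 − thr̄, (bias(θ), solo^?) →ψ (f',d') implies (f',d') = (solo^a, solo^a). -/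
open Classical

namespace HO

/-! ### Auxiliary lemmas for Statement 18 -/

lemma filterMap_id_cons_none (H : Multiset Val) :
    ((none : Val) ::ₘ H).filterMap id = H.filterMap id := by
  simp

lemma filterMap_id_cons_some (H : Multiset Val) (y : ℕ) :
    ((some y : Val) ::ₘ H).filterMap id = y ::ₘ H.filterMap id := by
  simp

lemma count_filterMap_id (H : Multiset Val) (v : ℕ) :
    (H.filterMap id).count v = H.count (some v) := by
  induction H using Multiset.induction with
  | empty => simp
  | cons x H ih =>
    cases x with
    | none =>
      rw [filterMap_id_cons_none, ih, Multiset.count_cons_of_ne (by simp)]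
    | some y =>
      rw [filterMap_id_cons_some, Multiset.count_cons, Multiset.count_cons, ih]
      simp

lemma card_filterMap_id (H : Multiset Val) (h : ∀ x ∈ H, x ≠ none) :
    Multiset.card (H.filterMap id) = Multiset.card H := by
  induction H using Multiset.induction with
  | empty => simp
  | cons x H ih =>
    cases x with
    | none => exact absurd rfl (h none (Multiset.mem_cons_self _ _))
    | some y =>
      rw [filterMap_id_cons_some]
      simp only [Multiset.card_cons]
      rw [ih (fun x hx => h x (Multiset.mem_cons_of_mem hx))]

lemma mem_filterMap_id {H : Multiset Val} {x : ℕ} :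
    x ∈ H.filterMap id ↔ some x ∈ H := by
  simp [Multiset.mem_filterMap]

lemma two_val_decomp (w l : ℕ) (hwl : w ≠ l) (S : Multiset ℕ)
    (h : ∀ x ∈ S, x = w ∨ x = l) :
    S = Multiset.replicate (S.count w) w + Multiset.replicate (S.count l) l := by
  ext x
  simp only [Multiset.count_add, Multiset.count_replicate]
  by_cases hxw : x = w
  · subst hxw
    rw [if_pos rfl, if_neg (Ne.symm hwl)]
    omega
  · by_cases hxl : x = l
    · subst hxl
      rw [if_neg hwl, if_pos rfl]
      omega
    · have hx : x ∉ S := fun hx => by rcases h x hx with rfl | rfl <;> simp_all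
      rw [if_neg (fun h => hxw h.symm), if_neg (fun h => hxl h.symm),
        Multiset.count_eq_zero.mpr hx]

lemma msMin_eq (S : Multiset ℕ) (v : ℕ) (hv : v ∈ S.toFinset)
    (hmin : ∀ u ∈ S.toFinset, v ≤ u) : msMin S = some v := by
  rw [msMin, dif_pos ⟨v, hv⟩]
  exact congrArg some (le_antisymm (Finset.min'_le _ v hv) (Finset.le_min' _ _ _ hmin))

lemma msSmor_eq (S : Multiset ℕ) (w : ℕ) (hw : w ∈ S.toFinset)
    (hmaj : ∀ u ∈ S.toFinset, u ≠ w → S.count u < S.count w) :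
    msSmor S = some w := by
  have hset : (S.toFinset.filter fun v => ∀ u ∈ S.toFinset, S.count u ≤ S.count v) = {w} := by
    ext v
    simp only [Finset.mem_filter, Finset.mem_singleton]
    constructor
    · rintro ⟨hv, hall⟩
      by_contra hvw
      exact absurd (hall w hw) (not_le.mpr (hmaj v hv hvw))
    · intro hv
      rw [hv]
      refine ⟨hw, fun u hu => ?_⟩
      rcases eq_or_ne u w with rfl | h
      · exact le_refl _
      · exact le_of_lt (hmaj u hu h)
  rw [msSmor, dif_pos (hset ▸ Finset.singleton_nonempty w)]
  refine congrArg some (le_antisymm (Finset.min'_le _ w ?_) (Finset.le_min' _ _ _ ?_))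
  · rw [hset]; exact Finset.mem_singleton_self w
  · intro y hy; rw [hset] at hy; exact (Finset.mem_singleton.mp hy).ge

lemma minThr_mem : ∀ L : List ℝ, L ≠ [] → minThr L ∈ L
  | [t], _ => by rw [minThr]; exact List.mem_singleton_self t
  | t :: t' :: ts, _ => by
    have he : minThr (t :: t' :: ts) = min t (minThr (t' :: ts)) := rfl
    rw [he]
    rcases le_total t (minThr (t' :: ts)) with h | h
    · rw [min_eq_left h]; exact List.mem_cons_self
    · rw [min_eq_right h]
      exact List.mem_cons_of_mem _ (minThr_mem (t' :: ts) (List.cons_ne_nil _ _))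

lemma firstMult_smor (n : ℕ) (S : Multiset ℕ) (hcard : 1 < S.toFinset.card) :
    ∀ L : List (ℝ × Op), (∀ q ∈ L, q.2 = Op.smor) →
      (∃ q ∈ L, q.1 * n < (Multiset.card S : ℝ)) → firstMult n S L = msSmor S
  | [], _, hex => absurd hex (by simp)
  | (t, op) :: tl, hsm, hex => by
    rw [firstMult]
    by_cases h : 1 < S.toFinset.card ∧ t * n < (Multiset.card S : ℝ)
    · rw [if_pos h]
      have hop : op = Op.smor := hsm (t, op) List.mem_cons_self
      rw [hop]; rfl
    · rw [if_neg h]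
      refine firstMult_smor n S hcard tl (fun q hq => hsm q (List.mem_cons_of_mem _ hq)) ?_
      obtain ⟨q, hq, hlt⟩ := hex
      rcases List.mem_cons.mp hq with rfl | hq'
      · exact absurd ⟨hcard, hlt⟩ h
      · exact ⟨q, hq', hlt⟩

lemma mem_msetOf {n : ℕ} {f : Fin n → Val} {x : Val} :
    x ∈ msetOf f ↔ ∃ p, f p = x := by
  simp [msetOf, Multiset.mem_map, List.mem_ofFn]

lemma uniThr_some {R : Round} (h0 : 0 ≤ R.thrU) : R.uniThr = some R.thrU := by
  cases h : R.uniThr with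
  | none => simp [Round.thrU, h] at h0; linarith
  | some t => simp [Round.thrU, h]

lemma predThr_some {φ : RoundPred} (h : (0:ℝ) ≤ φ.thrVal) : φ.thr = some φ.thrVal := by
  cases hh : φ.thr with
  | none => simp [RoundPred.thrVal, hh] at h; linarith
  | some t => simp [RoundPred.thrVal, hh]

lemma roundTrans_solo {n : ℕ} {R : Round} {φ : RoundPred} (v : ℕ)
    (h0 : 0 ≤ R.thrU) (h1 : R.thrU ≤ φ.thrVal)
    {f' : Fin n → Val} (ht : roundTrans R φ (fun _ => some v) f') :
    f' = fun _ => some v := by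
  obtain ⟨Hs, hle, hsat, hup⟩ := ht
  have hφ0 : (0:ℝ) ≤ φ.thrVal := le_trans h0 h1
  have hthr := predThr_some hφ0
  funext p
  have hcard : φ.thrVal * n < (Multiset.card (Hs p) : ℝ) :=
    hsat.2 φ.thrVal (by simp [hthr]) p
  have hmem : ∀ x ∈ Hs p, x = some v := by
    intro x hx
    obtain ⟨q, hq⟩ := mem_msetOf.mp (Multiset.mem_of_le (hle p) hx)
    exact hq.symm
  set S := (Hs p).filterMap id with hSdef
  have hSmem : ∀ x ∈ S, x = v := by
    intro x hx
    exact Option.some_inj.mp (hmem _ (mem_filterMap_id.mp hx))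
  have hScard : Multiset.card S = Multiset.card (Hs p) :=
    card_filterMap_id _ (fun x hx => by rw [hmem x hx]; simp)
  have hpos : Multiset.card S ≠ 0 := by
    intro h
    rw [hScard] at h
    rw [h] at hcard
    have : (0:ℝ) ≤ φ.thrVal * n := mul_nonneg hφ0 (Nat.cast_nonneg n)
    simp at hcard; linarith
  have hSrep : S = Multiset.replicate (Multiset.card S) v :=
    Multiset.eq_replicate_card.mpr hSmem
  have htf : S.toFinset = {v} := by
    rw [hSrep, Multiset.toFinset_replicate, if_neg hpos]
  rw [hup p]
  simp only [Round.update]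
  rw [← hSdef]
  split_ifs with hcnd
  · refine msMin_eq S v ?_ ?_
    · rw [htf]; exact Finset.mem_singleton_self v
    · intro u hu; rw [htf] at hu
      exact (Finset.mem_singleton.mp hu).ge
  · exfalso
    apply hcnd
    refine ⟨R.thrU, by simp [uniThr_some h0], ?_, ?_⟩
    · rw [htf]; simp
    · calc R.thrU * n ≤ φ.thrVal * n :=
            mul_le_mul_of_nonneg_right h1 (Nat.cast_nonneg n)
        _ < (Multiset.card (Hs p) : ℝ) := hcard
        _ = (Multiset.card S : ℝ) := by rw [hScard]

lemma roundTrans_bias {n : ℕ} {R : Round} {φ : RoundPred} (w l : ℕ) (hwl : w ≠ l)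
    {f : Fin n → Val} (hf : ∀ p, f p = some w ∨ f p = some l)
    (h0 : 0 ≤ R.thrU) (h1 : R.thrU ≤ φ.thrVal)
    (hml : R.thrM ≤ R.thrU) (hmne : R.mults ≠ [])
    (hsm : ∀ q ∈ R.mults, q.2 = Op.smor)
    (hclU : (((msetOf f).count (some l)) : ℝ) ≤ R.thrU * n)
    (hclM : (((msetOf f).count (some l)) : ℝ) ≤ R.thrM / 2 * n)
    {f' : Fin n → Val} (ht : roundTrans R φ f f') :
    f' = fun _ => some w := by
  obtain ⟨Hs, hle, hsat, hup⟩ := ht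
  have hφ0 : (0:ℝ) ≤ φ.thrVal := le_trans h0 h1
  have hthr := predThr_some hφ0
  have hn0 : (0:ℝ) ≤ (n:ℝ) := Nat.cast_nonneg n
  have hUn : R.thrU * n ≤ φ.thrVal * n := mul_le_mul_of_nonneg_right h1 hn0
  have hMn : R.thrM * n ≤ R.thrU * n := mul_le_mul_of_nonneg_right hml hn0
  funext p
  have hcard : φ.thrVal * n < (Multiset.card (Hs p) : ℝ) :=
    hsat.2 φ.thrVal (by simp [hthr]) p
  have hmemH : ∀ x ∈ Hs p, x = some w ∨ x = some l := by
    intro x hx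
    obtain ⟨q, hq⟩ := mem_msetOf.mp (Multiset.mem_of_le (hle p) hx)
    rw [← hq]; exact hf q
  set S := (Hs p).filterMap id with hSdef
  have hSmem : ∀ x ∈ S, x = w ∨ x = l := by
    intro x hx
    rcases hmemH _ (mem_filterMap_id.mp hx) with h | h
    · exact Or.inl (Option.some_inj.mp h)
    · exact Or.inr (Option.some_inj.mp h)
  have hScard : Multiset.card S = Multiset.card (Hs p) :=
    card_filterMap_id _ (fun x hx => by rcases hmemH x hx with h | h <;> simp [h])
  have hdec : S = Multiset.replicate (S.count w) w + Multiset.replicate (S.count l) l :=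
    two_val_decomp w l hwl S hSmem
  have hcards : Multiset.card S = S.count w + S.count l := by
    conv_lhs => rw [hdec]
    simp [Multiset.card_replicate]
  have hkl1 : ((S.count l : ℕ) : ℝ) ≤ R.thrU * n ∧ ((S.count l : ℕ) : ℝ) ≤ R.thrM / 2 * n := by
    have e : S.count l = (Hs p).count (some l) := count_filterMap_id _ l
    have h2 : S.count l ≤ (msetOf f).count (some l) := by
      rw [e]; exact Multiset.count_le_of_le _ (hle p)
    have h3 : ((S.count l : ℕ) : ℝ) ≤ (((msetOf f).count (some l)) : ℝ) := Nat.cast_le.mpr h2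
    exact ⟨le_trans h3 hclU, le_trans h3 hclM⟩
  have hcR : φ.thrVal * n < ((S.count w : ℕ) : ℝ) + ((S.count l : ℕ) : ℝ) := by
    have : φ.thrVal * n < (Multiset.card S : ℝ) := by rw [hScard]; exact hcard
    rw [hcards] at this
    push_cast at this
    exact this
  have hkw0 : S.count w ≠ 0 := by
    intro h
    rw [h] at hcR
    simp at hcR
    linarith [hkl1.1]
  rw [hup p]
  simp only [Round.update]
  rw [← hSdef]
  by_cases hkl0 : S.count l = 0
  · -- only w present: the uni instruction fires
    have hrep : S = Multiset.replicate (S.count w) w := by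
      conv_lhs => rw [hdec]
      rw [hkl0]
      simp
    have htf : S.toFinset = {w} := by
      rw [hrep, Multiset.toFinset_replicate, if_neg hkw0]
    split_ifs with hcnd
    · refine msMin_eq S w ?_ ?_
      · rw [htf]; exact Finset.mem_singleton_self w
      · intro u hu; rw [htf] at hu
        exact (Finset.mem_singleton.mp hu).ge
    · exfalso
      apply hcnd
      refine ⟨R.thrU, by simp [uniThr_some h0], ?_, ?_⟩
      · rw [htf]; simp
      · rw [hcards, hkl0]
        rw [hkl0] at hcR
        simp at hcR
        push_cast
        linarith
  · -- both present: a mult instruction fires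
    have hwin : w ∈ S := Multiset.count_pos.mp (Nat.pos_of_ne_zero hkw0)
    have hlin : l ∈ S := Multiset.count_pos.mp (Nat.pos_of_ne_zero hkl0)
    have h2card : 1 < S.toFinset.card :=
      Finset.one_lt_card.mpr
        ⟨w, Multiset.mem_toFinset.mpr hwin, l, Multiset.mem_toFinset.mpr hlin, hwl⟩
    have hklkw : S.count l < S.count w := by
      have hrl : ((S.count l : ℕ) : ℝ) < ((S.count w : ℕ) : ℝ) := by
        linarith [hkl1.1, hkl1.2, hcR, hUn, hMn]
      exact_mod_cast hrl
    split_ifs with hcnd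
    · exfalso
      obtain ⟨t, _, hc1, _⟩ := hcnd
      omega
    · have hex : ∃ q ∈ R.mults, q.1 * n < (Multiset.card S : ℝ) := by
        have hmemm := minThr_mem (R.mults.map Prod.fst)
          (fun hnil => hmne (List.map_eq_nil_iff.mp hnil))
        obtain ⟨q, hq, hq1⟩ := List.mem_map.mp hmemm
        refine ⟨q, hq, ?_⟩
        have hqthr : q.1 = R.thrM := hq1
        rw [hqthr, hcards]
        push_cast
        linarith [hkl1.2]
      rw [firstMult_smor n S h2card R.mults hsm hex]
      refine msSmor_eq S w (Multiset.mem_toFinset.mpr hwin) ?_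
      intro u hu hune
      rcases hSmem u (Multiset.mem_toFinset.mp hu) with rfl | rfl
      · exact absurd rfl hune
      · exact hklkw

lemma chain_const (A : Algo) (ψ : PhasePred) (hd : A.decider ψ) {n : ℕ} (v : ℕ)
    (g : ℕ → Fin n → Val)
    (hstep : ∀ i, 1 ≤ i → i ≤ A.r → roundTrans (A.rounds i) (ψ i) (g (i-1)) (g i))
    (m : ℕ) (hm : g m = fun _ => some v) :
    ∀ i, m ≤ i → i ≤ A.r → g i = fun _ => some v := by
  intro i
  induction i with
  | zero =>
    intro h1 _
    have : m = 0 := Nat.le_zero.mp h1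
    exact this ▸ hm
  | succ i ih =>
    intro h1 h2
    rcases eq_or_lt_of_le h1 with h | h
    · exact h ▸ hm
    · have hi : m ≤ i := Nat.lt_succ_iff.mp h
      have hg : g i = fun _ => some v := ih hi (by omega)
      have hstep' := hstep (i+1) (by omega) h2
      rw [Nat.add_sub_cancel, hg] at hstep'
      have hss := hd (i+1) (by omega) h2
      exact roundTrans_solo v hss.1 hss.2 hstep'

lemma phase_const (A : Algo) (ψ : PhasePred) (hd : A.decider ψ) {n : ℕ} (v : ℕ)
    {f f' d' : Fin n → Val}
    (ht : phaseTrans A ψ f (soloQ n) f' d')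
    (h1 : ∀ g : ℕ → Fin n → Val, g 0 = f →
        roundTrans (A.rounds 1) (ψ 1) (g 0) (g 1) → g 1 = fun _ => some v) :
    f' = (fun _ => some v) ∧ d' = (fun _ => some v) := by
  obtain ⟨g, hg0, hgstep, hf', hd'⟩ := ht
  have hr1 : 1 ≤ A.r := by have := A.two_le_r; omega
  have hg1 : g 1 = fun _ => some v := h1 g hg0 (hgstep 1 le_rfl hr1)
  have hall : ∀ i, 1 ≤ i → i ≤ A.r → g i = fun _ => some v :=
    chain_const A ψ hd v g hgstep 1 hg1
  have hir : g A.ir = fun _ => some v := hall A.ir A.one_le_ir (le_of_lt A.ir_lt_r)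
  have hrr : g A.r = fun _ => some v := hall A.r hr1 le_rfl
  constructor
  · funext p
    rw [hf' p, hir]
    simp
  · funext p
    rw [hd' p, hrr]
    simp [soloQ]

/-- Lemma 15.  Consider a syntactically safe core-language
algorithm satisfying Assumption (A), and a decider `ψ` whose round predicates
imply those of the global predicate `gl`.  Then (1) from `(solo, solo^?)` the
only phase transition leads to `(solo, solo)`; (2) from `(solo^a, solo^?)` it
leads to `(solo^a, solo^a)`; and (3) if moreover `thr_m^{1,k} ≤ thr_u^1`, then
from `(bias(θ), solo^?)` with `θ ≥ thr̄` it leads to `(solo, solo)` and with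
`θ ≤ 1 − thr̄` it leads to `(solo^a, solo^a)`. -/
theorem decider_phase (A : Algo) (gl ψ : PhasePred)
    (hs : A.syntSafe) (hA : A.assumptionA gl)
    (himp : predImplies A ψ gl)
    (hd : A.decider ψ) :
    (∀ n : ℕ, 0 < n → ∀ f' d' : Fin n → Val,
        phaseTrans A ψ (soloB n) (soloQ n) f' d' → f' = soloB n ∧ d' = soloB n) ∧
    (∀ n : ℕ, 0 < n → ∀ f' d' : Fin n → Val,
        phaseTrans A ψ (soloA n) (soloQ n) f' d' → f' = soloA n ∧ d' = soloA n) ∧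
    (A.thrM 1 ≤ A.thrU 1 →
      (∀ θ : ℝ, A.borderThr ≤ θ → ∀ n : ℕ, 0 < n → ∀ f f' d' : Fin n → Val,
          isBias θ f → phaseTrans A ψ f (soloQ n) f' d' →
          f' = soloB n ∧ d' = soloB n) ∧
      (∀ θ : ℝ, θ ≤ 1 - A.borderThr → ∀ n : ℕ, 0 < n → ∀ f f' d' : Fin n → Val,
          isBias θ f → phaseTrans A ψ f (soloQ n) f' d' →
          f' = soloA n ∧ d' = soloA n)) := by
  obtain ⟨hmult1, huni, hsmor1, hthrA, hthrB⟩ := hs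
  have hr1 : 1 ≤ A.r := by have := A.two_le_r; omega
  have hss1 := hd 1 le_rfl hr1
  have hba : bVal ≠ aVal := by norm_num [aVal, bVal]
  have hab : aVal ≠ bVal := by norm_num [aVal, bVal]
  refine ⟨?_, ?_, ?_⟩
  · intro n hn f' d' ht
    exact phase_const A ψ hd bVal ht (fun g hg0 hstep => by
      rw [hg0] at hstep
      exact roundTrans_solo bVal hss1.1 hss1.2 hstep)
  · intro n hn f' d' ht
    exact phase_const A ψ hd aVal ht (fun g hg0 hstep => by
      rw [hg0] at hstep
      exact roundTrans_solo aVal hss1.1 hss1.2 hstep)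
  · intro hMU
    have hbU : 1 - A.thrU 1 ≤ A.borderThr := le_max_left _ _
    have hbM : 1 - A.thrM 1 / 2 ≤ A.borderThr := le_max_right _ _
    constructor
    · -- θ ≥ thr̄ : result is solo (all b)
      intro θ hθ n hn f f' d' hbias ht
      obtain ⟨hfab, hcardb⟩ := hbias
      have hn0 : (0:ℝ) ≤ (n:ℝ) := Nat.cast_nonneg n
      have hcompl : (Finset.univ.filter fun p => f p = some aVal)
          = (Finset.univ.filter fun p => f p = some bVal)ᶜ := by
        ext p
        simp only [Finset.mem_filter, Finset.mem_compl, Finset.mem_univ, true_and]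
        rcases hfab p with h | h <;> simp [h, aVal, bVal]
      have hacard : (((msetOf f).count (some aVal)) : ℝ) = n - θ * n := by
        rw [count_msetOf, hcompl, Finset.card_compl]
        have hle : (Finset.univ.filter fun p => f p = some bVal).card ≤ n := by
          calc (Finset.univ.filter fun p => f p = some bVal).card
              ≤ Finset.univ.card := Finset.card_le_univ _
            _ = n := by simp
        rw [Nat.cast_sub (by simpa using hle)]
        rw [hcardb]
        simp
      have hbU' : (1 - A.thrU 1) * n ≤ θ * n :=
        mul_le_mul_of_nonneg_right (le_trans hbU hθ) hn0
      have hbM' : (1 - A.thrM 1 / 2) * n ≤ θ * n :=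
        mul_le_mul_of_nonneg_right (le_trans hbM hθ) hn0
      have hclU : (((msetOf f).count (some aVal)) : ℝ) ≤ A.thrU 1 * n := by
        rw [hacard]; nlinarith [hbU']
      have hclM : (((msetOf f).count (some aVal)) : ℝ) ≤ A.thrM 1 / 2 * n := by
        rw [hacard]; nlinarith [hbM']
      exact phase_const A ψ hd bVal ht (fun g hg0 hstep => by
        rw [hg0] at hstep
        exact roundTrans_bias bVal aVal hba (fun p => (hfab p).symm)
          hss1.1 hss1.2 hMU hmult1 hsmor1 hclU hclM hstep)
    · -- θ ≤ 1 − thr̄ : result is solo^a (all a)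
      intro θ hθ n hn f f' d' hbias ht
      obtain ⟨hfab, hcardb⟩ := hbias
      have hn0 : (0:ℝ) ≤ (n:ℝ) := Nat.cast_nonneg n
      have hbcard : (((msetOf f).count (some bVal)) : ℝ) = θ * n := by
        rw [count_msetOf]; exact hcardb
      have h1 : θ ≤ A.thrU 1 := by linarith [hbU, hθ]
      have h2 : θ ≤ A.thrM 1 / 2 := by linarith [hbM, hθ]
      have hclU : (((msetOf f).count (some bVal)) : ℝ) ≤ A.thrU 1 * n := by
        rw [hbcard]; exact mul_le_mul_of_nonneg_right h1 hn0
      have hclM : (((msetOf f).count (some bVal)) : ℝ) ≤ A.thrM 1 / 2 * n := by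
        rw [hbcard]; exact mul_le_mul_of_nonneg_right h2 hn0
      exact phase_const A ψ hd aVal ht (fun g hg0 hstep => by
        rw [hg0] at hstep
        exact roundTrans_bias aVal bVal hab hfab
          hss1.1 hss1.2 hMU hmult1 hsmor1 hclU hclM hstep)


end HO
end
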